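/- Strict monotonicity of the binary Rényi entropy: for every α > 0, the function x ↦ Sb α x is strictly decreasing on the closed interval [1/2, 1] (StrictAntiOn (Sb α) (Set.Icc (1/2 : ℝ) 1)). -/

import Mathlib

/-- Rényi entropy of the binary probability vector `(x, 1 - x)`
(Shannon entropy at `α = 1`; powers are `Real.rpow`). -/
noncomputable def Sb (α x : ℝ) : ℝ :=
  if α = 1 then -(x * Real.log x + (1 - x) * Real.log (1 - x))
  else (1 - α)⁻¹ * Real.log (x ^ α + (1 - x) ^ α)

open Real in
/-- Strict monotonicity of the binary Rényi entropy on `[1/2, 1]`. -/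
theorem binary_renyi_strictAntiOn (α : ℝ) (hα : 0 < α) :
    StrictAntiOn (Sb α) (Set.Icc (1 / 2 : ℝ) 1) := by
  have hint : interior (Set.Icc (1 / 2 : ℝ) 1) = Set.Ioo (1 / 2 : ℝ) 1 :=
    interior_Icc
  by_cases h1 : α = 1
  · subst h1
    have hfun : Set.EqOn (Sb 1)
        (fun x => -(x * Real.log x + (1 - x) * Real.log (1 - x)))
        (Set.Icc (1 / 2 : ℝ) 1) := by
      intro x _; simp [Sb]
    refine StrictAntiOn.congr ?_ hfun.symm
    apply strictAntiOn_of_deriv_neg (convex_Icc _ _)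
    · apply Continuous.continuousOn
      exact (continuous_mul_log.add
        (continuous_mul_log.comp (by continuity))).neg
    · intro x hx
      rw [hint] at hx
      obtain ⟨hx1, hx2⟩ := hx
      have hx0 : 0 < x := by linarith
      have h1x : 0 < 1 - x := by linarith
      have hd1 : HasDerivAt (fun y : ℝ => y * Real.log y) (Real.log x + 1) x :=
        hasDerivAt_mul_log hx0.ne'
      have hd2 : HasDerivAt (fun y : ℝ => (1 - y) * Real.log (1 - y))
          ((Real.log (1 - x) + 1) * (-1)) x := by
        have hid : HasDerivAt (fun y : ℝ => 1 - y) (-1) x := by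
          simpa using (hasDerivAt_id x).const_sub 1
        exact (hasDerivAt_mul_log h1x.ne').comp x hid
      have hd : HasDerivAt (fun y : ℝ => -(y * Real.log y + (1 - y) * Real.log (1 - y)))
          (-((Real.log x + 1) + (Real.log (1 - x) + 1) * (-1))) x := (hd1.add hd2).neg
      rw [hd.deriv]
      have : Real.log (1 - x) < Real.log x := Real.log_lt_log h1x (by linarith)
      nlinarith [this]
  · have hfun : Set.EqOn (Sb α)
        (fun x => (1 - α)⁻¹ * Real.log (x ^ α + (1 - x) ^ α))
        (Set.Icc (1 / 2 : ℝ) 1) := by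
      intro x _; simp [Sb, h1]
    refine StrictAntiOn.congr ?_ hfun.symm
    apply strictAntiOn_of_deriv_neg (convex_Icc _ _)
    · apply ContinuousOn.mul continuousOn_const
      apply ContinuousOn.log
      · exact (((Real.continuous_rpow_const hα.le).comp continuous_id).add
          ((Real.continuous_rpow_const hα.le).comp (by continuity))).continuousOn
      · intro x hx
        have hx0 : 0 < x := by have := hx.1; linarith
        have h1x : 0 ≤ 1 - x := by have := hx.2; linarith
        have : 0 < x ^ α := Real.rpow_pos_of_pos hx0 α
        have h2 : 0 ≤ (1 - x) ^ α := Real.rpow_nonneg h1x α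
        positivity
    · intro x hx
      rw [hint] at hx
      obtain ⟨hx1, hx2⟩ := hx
      have hx0 : 0 < x := by linarith
      have h1x : 0 < 1 - x := by linarith
      have hlt : 1 - x < x := by linarith
      have hfpos : 0 < x ^ α + (1 - x) ^ α := by
        have := Real.rpow_pos_of_pos hx0 α
        have := Real.rpow_pos_of_pos h1x α
        linarith
      have hd1 : HasDerivAt (fun y : ℝ => y ^ α) (α * x ^ (α - 1)) x := by
        simpa using Real.hasDerivAt_rpow_const (Or.inl hx0.ne')
      have hd2 : HasDerivAt (fun y : ℝ => (1 - y) ^ α)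
          (α * (1 - x) ^ (α - 1) * (-1)) x := by
        have hid : HasDerivAt (fun y : ℝ => 1 - y) (-1) x := by
          simpa using (hasDerivAt_id x).const_sub 1
        exact (Real.hasDerivAt_rpow_const (p := α) (Or.inl h1x.ne')).comp x hid
      have hd : HasDerivAt (fun y : ℝ => (1 - α)⁻¹ * Real.log (y ^ α + (1 - y) ^ α))
          ((1 - α)⁻¹ * ((α * x ^ (α - 1) + α * (1 - x) ^ (α - 1) * (-1)) /
            (x ^ α + (1 - x) ^ α))) x :=
        (((hd1.add hd2).log hfpos.ne')).const_mul _
      rw [hd.deriv]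
      rcases lt_or_gt_of_ne h1 with hlt1 | hgt1
      · -- α < 1 : exponent α - 1 < 0, so x^(α-1) < (1-x)^(α-1)
        have hcmp : x ^ (α - 1) < (1 - x) ^ (α - 1) :=
          Real.rpow_lt_rpow_of_neg h1x hlt (by linarith)
        have hnum : α * x ^ (α - 1) + α * (1 - x) ^ (α - 1) * (-1) < 0 := by nlinarith
        have hinv : 0 < (1 - α)⁻¹ := by
          apply inv_pos.mpr; linarith
        have := div_neg_of_neg_of_pos hnum hfpos
        exact mul_neg_of_pos_of_neg hinv this
      · -- α > 1 : exponent α - 1 > 0, so (1-x)^(α-1) < x^(α-1)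
        have hcmp : (1 - x) ^ (α - 1) < x ^ (α - 1) :=
          Real.rpow_lt_rpow h1x.le hlt (by linarith)
        have hnum : 0 < α * x ^ (α - 1) + α * (1 - x) ^ (α - 1) * (-1) := by nlinarith
        have hinv : (1 - α)⁻¹ < 0 := by
          rw [inv_neg'']; linarith
        have := div_pos hnum hfpos
        exact mul_neg_of_neg_of_pos hinv this
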